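/- Let A be a C*-algebra, G a compact group acting on A by a continuous action α, and let π be a finite-dimensional unitary representation of G. Define A₂(π) as the set of matrices [a_{ij}] in A ⊗ B(H_π) (i.e., d×d matrices over A) satisfying (α_g ⊗ id)([a_{ij}]) = [a_{ij}](1 ⊗ π(g)) for all g ∈ G. Then for m, n ∈ A₂(π), the product m n* lies in the fixed-point algebra of α ⊗ id on A ⊗ B(H_π), and the linear span of such products m n* is a two-sided ideal of that fixed-point algebra. -/

import Mathlib

open scoped Matrix

/-- For a C*-dynamical system `(A, G, α)` with `G` compact and a finite-dimensional
unitary representation `π` of `G`, with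
`A₂(π) = { m : Matrix over A | (α_g ⊗ id)(m) = m (1 ⊗ π g) for all g }`,
the products `m * nᴴ` with `m, n ∈ A₂(π)` lie in the fixed-point algebra of
`α ⊗ id`, and their linear span is a two-sided ideal of that fixed-point algebra. -/
theorem spectral_subspace_products_ideal_of_fixedPoint
    {G A : Type*} [Group G] [TopologicalSpace G] [IsTopologicalGroup G] [CompactSpace G]
    [NonUnitalCStarAlgebra A]
    (α : G → (A ≃⋆ₐ[ℂ] A))
    (hα : ∀ g h a, α (g * h) a = α g (α h a))
    (hcont : ∀ a : A, Continuous fun g => α g a)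
    (d : ℕ) (π : G →* Matrix.unitaryGroup (Fin d) ℂ)
    (hπcont : Continuous fun g => (π g : Matrix (Fin d) (Fin d) ℂ))
    -- the spectral subspace `A₂(π)`
    (A₂ : Set (Matrix (Fin d) (Fin d) A))
    (hA₂ : A₂ = {m | ∀ g : G, m.map (α g) =
      Matrix.of fun i j => ∑ l, (π g : Matrix (Fin d) (Fin d) ℂ) l j • m i l})
    -- the fixed-point algebra of `α ⊗ id`
    (F : Set (Matrix (Fin d) (Fin d) A))
    (hF : F = {m | ∀ g : G, m.map (α g) = m})
    -- the span of products `m * nᴴ`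
    (J : Submodule ℂ (Matrix (Fin d) (Fin d) A))
    (hJ : J = Submodule.span ℂ {x | ∃ m ∈ A₂, ∃ n ∈ A₂, x = m * nᴴ}) :
    (∀ m ∈ A₂, ∀ n ∈ A₂, m * nᴴ ∈ F) ∧
    (∀ x ∈ J, x ∈ F) ∧
    (∀ x ∈ J, ∀ y ∈ F, x * y ∈ J ∧ y * x ∈ J) := by
  -- unitarity at the entry level
  have hunit : ∀ g : G, ∀ l p : Fin d,
      (∑ k, (π g : Matrix (Fin d) (Fin d) ℂ) l k * star ((π g : Matrix (Fin d) (Fin d) ℂ) p k))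
        = if l = p then 1 else 0 := by
    intro g l p
    have h := ((Unitary.mem_iff).mp (π g).prop).2
    have h2 : ((π g : Matrix (Fin d) (Fin d) ℂ) * star (π g : Matrix (Fin d) (Fin d) ℂ)) l p
        = (1 : Matrix (Fin d) (Fin d) ℂ) l p := by rw [h]
    simpa [Matrix.mul_apply, Matrix.star_apply, Matrix.one_apply] using h2
  have hA2' : ∀ m : Matrix (Fin d) (Fin d) A, m ∈ A₂ ↔ ∀ g : G, ∀ i j,
      α g (m i j) = ∑ l, (π g : Matrix (Fin d) (Fin d) ℂ) l j • m i l := by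
    intro m
    rw [hA₂]
    constructor
    · intro hm g i j
      exact congrFun (congrFun (hm g) i) j
    · intro hm g
      ext i j
      exact hm g i j
  have hF' : ∀ m : Matrix (Fin d) (Fin d) A, m ∈ F ↔ ∀ g : G, ∀ i j,
      α g (m i j) = m i j := by
    intro m
    rw [hF]
    constructor
    · intro hm g i j
      exact congrFun (congrFun (hm g) i) j
    · intro hm g
      ext i j
      exact hm g i j
  -- products land in the fixed point algebra
  have key1 : ∀ m ∈ A₂, ∀ n ∈ A₂, m * nᴴ ∈ F := by
    intro m hm n hn
    rw [hF']
    intro g i j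
    rw [Matrix.mul_apply]
    simp only [Matrix.conjTranspose_apply, map_sum, map_mul, map_star,
      (hA2' m).mp hm g, (hA2' n).mp hn g]
    simp only [star_sum, star_smul, Finset.sum_mul_sum, smul_mul_smul_comm]
    rw [Finset.sum_comm]
    conv_lhs => enter [2, l]; rw [Finset.sum_comm]
    simp only [← Finset.sum_smul, hunit g, ite_smul, one_smul, zero_smul,
      Finset.sum_ite_eq, Finset.mem_univ, if_true]
  -- F absorbs A₂ on both sides appropriately
  have habs1 : ∀ y ∈ F, ∀ m ∈ A₂, y * m ∈ A₂ := by
    intro y hy m hm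
    rw [hA2']
    intro g i j
    rw [Matrix.mul_apply]
    simp only [map_sum, map_mul, (hF' y).mp hy g, (hA2' m).mp hm g, Finset.mul_sum,
      mul_smul_comm, Matrix.mul_apply, Finset.smul_sum]
    exact Finset.sum_comm
  have habs2 : ∀ y ∈ F, ∀ n ∈ A₂, yᴴ * n ∈ A₂ := by
    intro y hy n hn
    rw [hA2']
    intro g i j
    rw [Matrix.mul_apply]
    simp only [Matrix.conjTranspose_apply, map_sum, map_mul, map_star,
      (hF' y).mp hy g, (hA2' n).mp hn g, Finset.mul_sum,
      mul_smul_comm, Matrix.mul_apply, Finset.smul_sum]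
    exact Finset.sum_comm
  refine ⟨key1, ?_, ?_⟩
  · intro x hx
    rw [hJ] at hx
    induction hx using Submodule.span_induction with
    | mem x hx =>
      obtain ⟨m, hm, n, hn, rfl⟩ := hx
      exact key1 m hm n hn
    | zero =>
      rw [hF']
      intro g i j
      simp
    | add x y hx hy ihx ihy =>
      rw [hF'] at ihx ihy ⊢
      intro g i j
      simp [Matrix.add_apply, map_add, ihx g i j, ihy g i j]
    | smul c x hx ihx =>
      rw [hF'] at ihx ⊢
      intro g i j
      simp [Matrix.smul_apply, map_smul, ihx g i j]
  · intro x hx y hy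
    rw [hJ] at hx ⊢
    induction hx using Submodule.span_induction with
    | mem x hx =>
      obtain ⟨m, hm, n, hn, rfl⟩ := hx
      constructor
      · have : m * nᴴ * y = m * (yᴴ * n)ᴴ := by
          rw [Matrix.conjTranspose_mul, Matrix.conjTranspose_conjTranspose, mul_assoc]
        rw [this]
        exact Submodule.subset_span ⟨m, hm, yᴴ * n, habs2 y hy n hn, rfl⟩
      · have : y * (m * nᴴ) = (y * m) * nᴴ := by rw [mul_assoc]
        rw [this]
        exact Submodule.subset_span ⟨y * m, habs1 y hy m hm, n, hn, rfl⟩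
    | zero => simp
    | add a b ha hb iha ihb =>
      exact ⟨by rw [add_mul]; exact Submodule.add_mem _ iha.1 ihb.1,
        by rw [mul_add]; exact Submodule.add_mem _ iha.2 ihb.2⟩
    | smul c a ha iha =>
      exact ⟨by rw [smul_mul_assoc]; exact Submodule.smul_mem _ c iha.1,
        by rw [mul_smul_comm]; exact Submodule.smul_mem _ c iha.2⟩
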